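/- arXiv:1501.07546 — 3 statements merged into one kernel-verified Lean document; each statement's English description precedes it below -/
import Mathlib

section
/- The 2-break distance between circular genomes P and Q on the same n blocks equals n - c(P,Q), where c(P,Q) is the number of alternating black-red cycles in the breakpoint graph G(P,Q). -/
/-- A genome (set of adjacency edges) is a perfect matching on the vertex set,
modeled as a fixed-point-free involution. -/
def IsPerfectMatching {V : Type*} (m : Equiv.Perm V) : Prop :=
  (∀ v, m (m v) = v) ∧ ∀ v, m v ≠ v

/-- The number of alternating black-red cycles of the breakpoint graph
`G(P,Q)` (black matching `black`, red matching `red`): each alternating cycle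
with `ℓ` black edges corresponds to exactly two orbits of size `ℓ` of the
permutation `black * red`, so we count the orbits (nontrivial ones via
`cycleType`, fixed points separately) and halve. -/
def bpCycles {V : Type*} [Fintype V] [DecidableEq V] (black red : Equiv.Perm V) : ℕ :=
  ((black * red).cycleType.card + (Fintype.card V - (black * red).support.card)) / 2

/-- A 2-break on the matching `m`: pick two distinct red edges
`{a, m a}` and `{b, m b}` and replace them by `{a, m b}`, `{b, m a}`
(conjugation by the transposition `swap a b`). -/
def TwoBreak {V : Type*} [DecidableEq V] (m m' : Equiv.Perm V) : Prop :=
  ∃ a b : V, a ≠ b ∧ m a ≠ b ∧ m' = (Equiv.swap a b) * m * (Equiv.swap a b)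

/-- A scenario of k 2-breaks transforming the red matching Q into the black
matching P. -/
def TwoBreakChain {V : Type*} [DecidableEq V] (P Q : Equiv.Perm V) (k : ℕ) : Prop :=
  ∃ f : ℕ → Equiv.Perm V, f 0 = Q ∧ f k = P ∧ ∀ i < k, TwoBreak (f i) (f (i + 1))


set_option linter.unusedSectionVars false
set_option linter.unusedVariables false

open Equiv Equiv.Perm

section TwoBreakAux

variable {V : Type*} [Fintype V] [DecidableEq V]

/-- The same-cycle setoid of a permutation. -/
def scs (g : Equiv.Perm V) : Setoid V :=
  ⟨g.SameCycle, ⟨fun x => Equiv.Perm.SameCycle.refl g x,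
    fun h => h.symm, fun h h' => h.trans h'⟩⟩

/-- Number of cycles (orbits, including fixed points) of a permutation. -/
noncomputable def cq (g : Equiv.Perm V) : ℕ := Nat.card (Quotient (scs g))

theorem cq_le (g : Equiv.Perm V) : cq g ≤ Fintype.card V := by
  rw [← Nat.card_eq_fintype_card]
  exact Nat.card_le_card_of_surjective (Quotient.mk (scs g)) Quotient.exists_rep

theorem eq_of_fixed_sameCycle {g : Equiv.Perm V} {x y : V} (hx : g x = x)
    (h : g.SameCycle x y) : y = x := by
  obtain ⟨i, -, rfl⟩ := h.exists_pow_eq'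
  exact Equiv.Perm.pow_apply_eq_self_of_apply_eq_self hx i

theorem sameCycle_of_step {g h : Equiv.Perm V} (hstep : ∀ u : V, h.SameCycle u (g u)) :
    ∀ {x y : V}, g.SameCycle x y → h.SameCycle x y := by
  intro x y hxy
  obtain ⟨i, -, rfl⟩ := hxy.exists_pow_eq'
  clear hxy
  induction i with
  | zero => simpa using Equiv.Perm.SameCycle.refl h x
  | succ n ih =>
    have heq : (g ^ (n + 1)) x = g ((g ^ n) x) := by
      rw [pow_succ', Equiv.Perm.mul_apply]
    rw [heq]
    exact ih.trans (hstep ((g ^ n) x))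

theorem cq_eq (g : Equiv.Perm V) :
    g.cycleType.card + (Fintype.card V - g.support.card) = cq g := by
  classical
  set T := ({c // c ∈ g.cycleFactorsFinset} ⊕ {x // g x = x}) with hT
  have hmoved : ∀ {x y : V}, g.SameCycle x y → g x ≠ x → g y ≠ y := by
    intro x y hxy hx hy
    exact hx (by rw [eq_of_fixed_sameCycle hy hxy.symm]; exact hy)
  let f0 : V → T := fun x =>
    if h : g x = x then Sum.inr ⟨x, h⟩
    else Sum.inl ⟨g.cycleOf x,
      Equiv.Perm.cycleOf_mem_cycleFactorsFinset_iff.mpr (Equiv.Perm.mem_support.mpr h)⟩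
  have hsound : ∀ x y : V, g.SameCycle x y → f0 x = f0 y := by
    intro x y hxy
    by_cases hx : g x = x
    · rw [eq_of_fixed_sameCycle hx hxy]
    · have hy : g y ≠ y := hmoved hxy hx
      simp only [f0, dif_neg hx, dif_neg hy]
      exact congrArg _ (Subtype.ext hxy.cycleOf_eq)
  let F : Quotient (scs g) → T := Quotient.lift f0 hsound
  have hbij : Function.Bijective F := by
    constructor
    · intro c1 c2 h
      obtain ⟨x, rfl⟩ := Quotient.exists_rep c1
      obtain ⟨y, rfl⟩ := Quotient.exists_rep c2
      change f0 x = f0 y at h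
      have hpos : ∀ (z : V) (hz : g z = z), f0 z = Sum.inr ⟨z, hz⟩ :=
        fun z hz => dif_pos hz
      have hneg : ∀ (z : V) (hz : ¬ g z = z), f0 z = Sum.inl ⟨g.cycleOf z,
          Equiv.Perm.cycleOf_mem_cycleFactorsFinset_iff.mpr (Equiv.Perm.mem_support.mpr hz)⟩ :=
        fun z hz => dif_neg hz
      by_cases hx : g x = x <;> by_cases hy : g y = y
      · rw [hpos x hx, hpos y hy] at h
        have hxy : x = y := Subtype.ext_iff.mp (Sum.inr.inj h)
        exact Quotient.sound (hxy ▸ Equiv.Perm.SameCycle.refl g x)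
      · rw [hpos x hx, hneg y hy] at h
        exact absurd h (by simp)
      · rw [hneg x hx, hpos y hy] at h
        exact absurd h (by simp)
      · rw [hneg x hx, hneg y hy] at h
        have h' : g.cycleOf x = g.cycleOf y := Subtype.ext_iff.mp (Sum.inl.inj h)
        refine Quotient.sound ?_
        have hy' : y ∈ (g.cycleOf x).support := by
          rw [h']
          exact (Equiv.Perm.mem_support_cycleOf_iff).mpr
            ⟨Equiv.Perm.SameCycle.refl g y, Equiv.Perm.mem_support.mpr hy⟩
        exact ((Equiv.Perm.mem_support_cycleOf_iff).mp hy').1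
    · rintro (⟨c, hc⟩ | ⟨x, hx⟩)
      · have hcyc : c.IsCycle := (Equiv.Perm.mem_cycleFactorsFinset_iff.mp hc).1
        obtain ⟨a, ha, -⟩ := hcyc
        have hasup : a ∈ c.support := Equiv.Perm.mem_support.mpr ha
        have hga : g a ≠ a := by
          rw [← (Equiv.Perm.mem_cycleFactorsFinset_iff.mp hc).2 a hasup]
          exact ha
        refine ⟨Quotient.mk _ a, ?_⟩
        change f0 a = _
        simp only [f0, dif_neg hga]
        exact congrArg _ (Subtype.ext (Equiv.Perm.cycle_is_cycleOf hasup hc).symm)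
      · exact ⟨Quotient.mk _ x, by change f0 x = _; simp only [f0, dif_pos hx]⟩
  have hcard : cq g = Nat.card T := Nat.card_eq_of_bijective F hbij
  rw [hcard, hT, Nat.card_sum, Nat.card_eq_fintype_card, Nat.card_eq_fintype_card,
    Fintype.card_coe, Fintype.card_subtype]
  congr 1
  · rw [Equiv.Perm.cycleType_def, Multiset.card_map]; rfl
  · have := Finset.card_filter_add_card_filter_not
      (s := (Finset.univ : Finset V)) (p := fun x => g x = x)
    have hsup : Finset.filter (fun x => ¬ g x = x) Finset.univ = g.support := by
      ext x; simp [Equiv.Perm.mem_support]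
    rw [hsup, Finset.card_univ] at this
    omega

/-- Multiplying on the right by a transposition increases the cycle count by at most 1. -/
theorem cq_mul_swap_le (g : Equiv.Perm V) {a b : V} (hab : a ≠ b) :
    cq (g * Equiv.swap a b) ≤ cq g + 1 := by
  classical
  set h := g * Equiv.swap a b with hh
  let r : V → V → Prop := fun x y => h.SameCycle x y ∨
    ((h.SameCycle x a ∨ h.SameCycle x b) ∧ (h.SameCycle y a ∨ h.SameCycle y b))
  have req : Equivalence r := by
    constructor
    · intro x; exact Or.inl (Equiv.Perm.SameCycle.refl h x)
    · rintro x y (hxy | ⟨h1, h2⟩)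
      · exact Or.inl hxy.symm
      · exact Or.inr ⟨h2, h1⟩
    · intro x y z hxy hyz
      rcases hxy with hxy | ⟨h1, h2⟩
      · rcases hyz with hyz | ⟨h3, h4⟩
        · exact Or.inl (hxy.trans hyz)
        · refine Or.inr ⟨?_, h4⟩
          rcases h3 with t | t
          · exact Or.inl (hxy.trans t)
          · exact Or.inr (hxy.trans t)
      · rcases hyz with hyz | ⟨h3, h4⟩
        · refine Or.inr ⟨h1, ?_⟩
          rcases h2 with t | t
          · exact Or.inl (hyz.symm.trans t)
          · exact Or.inr (hyz.symm.trans t)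
        · exact Or.inr ⟨h1, h4⟩
  let R : Setoid V := ⟨r, req⟩
  have hg_le : ∀ x y : V, g.SameCycle x y → r x y := by
    have hApp : ∀ u : V, h.SameCycle (h u) u := fun u => ⟨-1, by simp⟩
    have hstep : ∀ u : V, r u (g u) := by
      intro u
      by_cases hua : u = a
      · rw [hua]
        refine Or.inr ⟨Or.inl (Equiv.Perm.SameCycle.refl h a), Or.inr ?_⟩
        have hga : g a = h b := by
          rw [hh, Equiv.Perm.mul_apply, Equiv.swap_apply_right]
        rw [hga]
        exact hApp b
      · by_cases hub : u = b
        · rw [hub]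
          refine Or.inr ⟨Or.inr (Equiv.Perm.SameCycle.refl h b), Or.inl ?_⟩
          have hgb : g b = h a := by
            rw [hh, Equiv.Perm.mul_apply, Equiv.swap_apply_left]
          rw [hgb]
          exact hApp a
        · have hgu : g u = h u := by
            rw [hh, Equiv.Perm.mul_apply, Equiv.swap_apply_of_ne_of_ne hua hub]
          rw [hgu]
          exact Or.inl ⟨1, by simp⟩
    intro x y hxy
    obtain ⟨i, -, rfl⟩ := hxy.exists_pow_eq'
    clear hxy
    induction i with
    | zero => simpa using req.refl x
    | succ n ih =>
      have heq : (g ^ (n + 1)) x = g ((g ^ n) x) := by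
        rw [pow_succ', Equiv.Perm.mul_apply]
      rw [heq]
      exact req.trans ih (hstep ((g ^ n) x))
  have hsur : Nat.card (Quotient R) ≤ cq g := by
    refine Nat.card_le_card_of_surjective
      (Quotient.lift (fun x => Quotient.mk R x)
        (fun x y hxy => Quotient.sound (hg_le x y hxy))) ?_
    intro q
    obtain ⟨x, rfl⟩ := Quotient.exists_rep q
    exact ⟨Quotient.mk _ x, rfl⟩
  let φ : Quotient (scs h) → Quotient R :=
    Quotient.lift (fun x => Quotient.mk R x) (fun x y hxy => Quotient.sound (Or.inl hxy))
  let ψ : Quotient (scs h) → Quotient R ⊕ Unit := fun c =>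
    if c = Quotient.mk (scs h) b then Sum.inr () else Sum.inl (φ c)
  have hinj : Function.Injective ψ := by
    intro c1 c2 hcc
    obtain ⟨x, rfl⟩ := Quotient.exists_rep c1
    obtain ⟨y, rfl⟩ := Quotient.exists_rep c2
    by_cases h1 : Quotient.mk (scs h) x = Quotient.mk (scs h) b <;>
      by_cases h2 : Quotient.mk (scs h) y = Quotient.mk (scs h) b
    · rw [h1, h2]
    · simp only [ψ, if_pos h1, if_neg h2] at hcc
      exact absurd hcc (by simp)
    · simp only [ψ, if_neg h1, if_pos h2] at hcc
      exact absurd hcc (by simp)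
    · simp only [ψ, if_neg h1, if_neg h2] at hcc
      have hr : r x y := Quotient.exact (Sum.inl.inj hcc)
      rcases hr with hxy | ⟨hx, hy⟩
      · exact Quotient.sound hxy
      · have hxa : h.SameCycle x a := hx.resolve_right fun t => h1 (Quotient.sound t)
        have hya : h.SameCycle y a := hy.resolve_right fun t => h2 (Quotient.sound t)
        exact Quotient.sound (hxa.trans hya.symm)
  have hcard := Nat.card_le_card_of_injective ψ hinj
  rw [Nat.card_sum] at hcard
  simp only [Nat.card_unique] at hcard
  calc cq h ≤ Nat.card (Quotient R) + 1 := hcard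
    _ ≤ cq g + 1 := by omega

/-- Excising a non-fixed point from its cycle increases the cycle count by exactly 1. -/
theorem cq_excise (g : Equiv.Perm V) {x : V} (hx : g x ≠ x) :
    cq (g * Equiv.swap x (g⁻¹ x)) = cq g + 1 := by
  classical
  set h := g * Equiv.swap x (g⁻¹ x) with hh
  have hApp : ∀ (k : Equiv.Perm V) (u : V), k.SameCycle u (k u) := fun k u => ⟨1, by simp⟩
  have hxinv : x ≠ g⁻¹ x := fun t => hx (by conv_lhs => rw [t]; rw [(show g (g⁻¹ x) = x from (Equiv.eq_symm_apply g).mp rfl)])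
  have hhx : h x = x := by
    rw [hh, Equiv.Perm.mul_apply, Equiv.swap_apply_left, (show g (g⁻¹ x) = x from (Equiv.eq_symm_apply g).mp rfl)]
  have hhinv : h (g⁻¹ x) = g x := by
    rw [hh, Equiv.Perm.mul_apply, Equiv.swap_apply_right]
  have hhu : ∀ u : V, u ≠ x → u ≠ g⁻¹ x → h u = g u := by
    intro u h1 h2
    rw [hh, Equiv.Perm.mul_apply, Equiv.swap_apply_of_ne_of_ne h1 h2]
  -- the h-class of x is a singleton
  have hfix : ∀ y : V, h.SameCycle x y → y = x := fun y => eq_of_fixed_sameCycle hhx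
  -- SameCycle h ≤ SameCycle g
  have h_le : ∀ {y z : V}, h.SameCycle y z → g.SameCycle y z := by
    refine sameCycle_of_step ?_
    intro u
    by_cases h1 : u = x
    · rw [h1, hhx]
    · by_cases h2 : u = g⁻¹ x
      · rw [h2, hhinv]
        exact ⟨2, by simp [zpow_two, pow_two]⟩
      · rw [hhu u h1 h2]
        exact hApp g u
  -- the key structure lemma
  have key : ∀ (y : V), y ≠ x → ∀ k : ℕ, h.SameCycle y ((g ^ k) y) ∨
      ((g ^ k) y = x ∧ h.SameCycle y ((g ^ (k + 1)) y)) := by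
    intro y hy k
    induction k with
    | zero => exact Or.inl (by simpa using Equiv.Perm.SameCycle.refl h y)
    | succ n ih =>
      have heq : ∀ m : ℕ, (g ^ (m + 1)) y = g ((g ^ m) y) := by
        intro m; rw [pow_succ', Equiv.Perm.mul_apply]
      rcases ih with hyk | ⟨hkx, hyk1⟩
      · set u := (g ^ n) y with hu
        have hux : u ≠ x := by
          intro t
          exact hy (hfix y (t ▸ hyk).symm)
        by_cases h2 : u = g⁻¹ x
        · refine Or.inr ⟨by rw [heq n, ← hu, h2, (show g (g⁻¹ x) = x from (Equiv.eq_symm_apply g).mp rfl)], ?_⟩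
          have : (g ^ (n + 1 + 1)) y = g (g u) := by rw [heq (n+1), heq n]
          rw [this, h2, (show g (g⁻¹ x) = x from (Equiv.eq_symm_apply g).mp rfl)]
          have hhu2 : h.SameCycle u (g x) := by
            rw [← hhinv, ← h2]
            exact hApp h u
          exact hyk.trans hhu2
        · refine Or.inl ?_
          rw [heq n, ← hu, ← hhu u hux h2]
          exact hyk.trans (hApp h u)
      · exact Or.inl hyk1
  -- same-cycle relations agree away from x
  have sc_iff : ∀ y z : V, y ≠ x → z ≠ x → (g.SameCycle y z ↔ h.SameCycle y z) := by
    intro y z hy hz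
    constructor
    · intro hyz
      obtain ⟨i, -, rfl⟩ := hyz.exists_pow_eq'
      rcases key y hy i with t | ⟨t, -⟩
      · exact t
      · exact absurd t hz
    · exact h_le
  -- upward injection : cq g + 1 ≤ cq h
  have hgx2 : g x ≠ x := hx
  let f0 : V → Quotient (scs h) := fun y =>
    if y = x then Quotient.mk (scs h) (g x) else Quotient.mk (scs h) y
  have hsound : ∀ y z : V, g.SameCycle y z → f0 y = f0 z := by
    intro y z hyz
    by_cases h1 : y = x <;> by_cases h2 : z = x
    · rw [h1, h2]
    · rw [show f0 y = Quotient.mk (scs h) (g x) from if_pos h1,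
        show f0 z = Quotient.mk (scs h) z from if_neg h2]
      refine Quotient.sound ((sc_iff (g x) z hgx2 h2).mp ?_)
      exact (hApp g x).symm.trans (h1 ▸ hyz)
    · rw [show f0 y = Quotient.mk (scs h) y from if_neg h1,
        show f0 z = Quotient.mk (scs h) (g x) from if_pos h2]
      refine Quotient.sound ((sc_iff y (g x) h1 hgx2).mp ?_)
      exact (h2 ▸ hyz).trans (hApp g x)
    · rw [show f0 y = Quotient.mk (scs h) y from if_neg h1,
        show f0 z = Quotient.mk (scs h) z from if_neg h2]
      exact Quotient.sound ((sc_iff y z h1 h2).mp hyz)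
  let F : Quotient (scs g) ⊕ Unit → Quotient (scs h) :=
    Sum.elim (Quotient.lift f0 hsound) (fun _ => Quotient.mk (scs h) x)
  have hFinj : Function.Injective F := by
    rintro (c1 | u1) (c2 | u2) hcc
    · obtain ⟨y, rfl⟩ := Quotient.exists_rep c1
      obtain ⟨z, rfl⟩ := Quotient.exists_rep c2
      change f0 y = f0 z at hcc
      refine congrArg Sum.inl (Quotient.sound ?_)
      by_cases h1 : y = x <;> by_cases h2 : z = x
      · rw [h1, h2]
      · rw [show f0 y = Quotient.mk (scs h) (g x) from if_pos h1,
          show f0 z = Quotient.mk (scs h) z from if_neg h2] at hcc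
        have := (sc_iff (g x) z hgx2 h2).mpr (Quotient.exact hcc)
        exact h1 ▸ ((hApp g x).trans this)
      · rw [show f0 y = Quotient.mk (scs h) y from if_neg h1,
          show f0 z = Quotient.mk (scs h) (g x) from if_pos h2] at hcc
        have := (sc_iff y (g x) h1 hgx2).mpr (Quotient.exact hcc)
        exact h2 ▸ (this.trans (hApp g x).symm)
      · rw [show f0 y = Quotient.mk (scs h) y from if_neg h1,
          show f0 z = Quotient.mk (scs h) z from if_neg h2] at hcc
        exact (sc_iff y z h1 h2).mpr (Quotient.exact hcc)
    · exfalso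
      obtain ⟨y, rfl⟩ := Quotient.exists_rep c1
      change f0 y = Quotient.mk (scs h) x at hcc
      by_cases h1 : y = x
      · rw [show f0 y = Quotient.mk (scs h) (g x) from if_pos h1] at hcc
        exact hgx2 (hfix (g x) (Quotient.exact hcc).symm)
      · rw [show f0 y = Quotient.mk (scs h) y from if_neg h1] at hcc
        exact h1 (hfix y (Quotient.exact hcc).symm)
    · exfalso
      obtain ⟨y, rfl⟩ := Quotient.exists_rep c2
      change Quotient.mk (scs h) x = f0 y at hcc
      by_cases h1 : y = x
      · rw [show f0 y = Quotient.mk (scs h) (g x) from if_pos h1] at hcc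
        exact hgx2 (hfix (g x) (Quotient.exact hcc))
      · rw [show f0 y = Quotient.mk (scs h) y from if_neg h1] at hcc
        exact h1 (hfix y (Quotient.exact hcc))
    · rfl
  have hup : cq g + 1 ≤ cq h := by
    have := Nat.card_le_card_of_injective F hFinj
    rw [Nat.card_sum] at this
    simpa only [Nat.card_unique, cq] using this
  -- downward injection : cq h ≤ cq g + 1
  let ρ : Quotient (scs h) → Quotient (scs g) :=
    Quotient.lift (fun y => Quotient.mk (scs g) y)
      (fun y z hyz => Quotient.sound (h_le hyz))
  let D : Quotient (scs h) → Quotient (scs g) ⊕ Unit := fun c =>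
    if c = Quotient.mk (scs h) x then Sum.inr () else Sum.inl (ρ c)
  have hDinj : Function.Injective D := by
    intro c1 c2 hcc
    obtain ⟨y, rfl⟩ := Quotient.exists_rep c1
    obtain ⟨z, rfl⟩ := Quotient.exists_rep c2
    by_cases h1 : Quotient.mk (scs h) y = Quotient.mk (scs h) x <;>
      by_cases h2 : Quotient.mk (scs h) z = Quotient.mk (scs h) x
    · rw [h1, h2]
    · simp only [D, if_pos h1, if_neg h2] at hcc
      exact absurd hcc (by simp)
    · simp only [D, if_neg h1, if_pos h2] at hcc
      exact absurd hcc (by simp)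
    · simp only [D, if_neg h1, if_neg h2] at hcc
      have hr : g.SameCycle y z := Quotient.exact (Sum.inl.inj hcc)
      have hy : y ≠ x := fun t => h1 (by rw [t])
      have hz : z ≠ x := fun t => h2 (by rw [t])
      exact Quotient.sound ((sc_iff y z hy hz).mp hr)
  have hdown : cq h ≤ cq g + 1 := by
    have := Nat.card_le_card_of_injective D hDinj
    rw [Nat.card_sum] at this
    simpa only [Nat.card_unique, cq] using this
  omega

theorem cq_excise_left (g : Equiv.Perm V) {x : V} (hx : g x ≠ x) :
    cq (Equiv.swap x (g x) * g) = cq g + 1 := by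
  have h1 : Equiv.swap x (g x) * g = g * Equiv.swap (g⁻¹ x) (g⁻¹ (g x)) :=
    Equiv.swap_mul_eq_mul_swap g x (g x)
  rw [h1, (show g⁻¹ (g x) = x from Equiv.Perm.inv_eq_iff_eq.mpr rfl), Equiv.swap_comm]
  exact cq_excise g hx

theorem cq_one : cq (1 : Equiv.Perm V) = Fintype.card V := by
  rw [← Nat.card_eq_fintype_card]
  refine (Nat.card_eq_of_bijective (Quotient.mk (scs (1 : Equiv.Perm V)))
    ⟨fun x y hxy => ?_, Quotient.exists_rep⟩).symm
  exact Equiv.Perm.sameCycle_one.mp (Quotient.exact hxy)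

theorem two_mul_cycleType_card_le (g : Equiv.Perm V) :
    2 * Multiset.card g.cycleType ≤ g.support.card := by
  rw [← Equiv.Perm.sum_cycleType]
  have h2 : ∀ x ∈ g.cycleType, 2 ≤ x := fun x hx => Equiv.Perm.two_le_of_mem_cycleType hx
  revert h2
  refine Multiset.induction_on g.cycleType (by simp) ?_
  intro a t ih h2
  simp only [Multiset.card_cons, Multiset.sum_cons]
  have ha := h2 a (Multiset.mem_cons_self a t)
  have ht := ih (fun x hx => h2 x (Multiset.mem_cons_of_mem hx))
  omega

theorem eq_one_of_cq_eq (g : Equiv.Perm V) (h : cq g = Fintype.card V) : g = 1 := by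
  have hb := cq_eq g
  have h1 := two_mul_cycleType_card_le g
  have h2 : g.support.card ≤ Fintype.card V := by
    rw [← Finset.card_univ]; exact Finset.card_le_univ _
  have h0 : g.support.card = 0 := by omega
  exact Equiv.Perm.support_eq_empty_iff.mp (Finset.card_eq_zero.mp h0)

theorem cq_swap_mul_le (g : Equiv.Perm V) {a b : V} (hab : a ≠ b) :
    cq (Equiv.swap a b * g) ≤ cq g + 1 := by
  rw [Equiv.swap_mul_eq_mul_swap]
  exact cq_mul_swap_le g (fun t => hab (g⁻¹.injective t))

theorem card_even (P : Equiv.Perm V) (hP : IsPerfectMatching P) :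
    Fintype.card V % 2 = 0 := by
  classical
  have hsup : P.support = Finset.univ := by
    ext x; simp [Equiv.Perm.mem_support, hP.2 x]
  have hsum := Equiv.Perm.sum_cycleType P
  have hP2 : P * P = 1 := Equiv.ext fun v => by simpa using hP.1 v
  have hord : orderOf P ∣ 2 := orderOf_dvd_of_pow_eq_one (by rw [pow_two]; exact hP2)
  have h2 : ∀ x ∈ P.cycleType, x = 2 := by
    intro x hx
    have h2x := Equiv.Perm.two_le_of_mem_cycleType hx
    have hdvd : x ∣ 2 := (Multiset.dvd_lcm hx).trans
      (by rw [Equiv.Perm.lcm_cycleType]; exact hord)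
    have := Nat.le_of_dvd (by norm_num) hdvd
    omega
  have hrepl : P.cycleType.sum = 2 * Multiset.card P.cycleType := by
    conv_lhs => rw [Multiset.eq_replicate_card.mpr h2]
    rw [Multiset.sum_replicate, smul_eq_mul, mul_comm]
  rw [hrepl, hsup, Finset.card_univ] at hsum
  omega

theorem cq_twoBreak_le (P : Equiv.Perm V) {m m' : Equiv.Perm V}
    (h : TwoBreak m m') : cq (P * m') ≤ cq (P * m) + 2 := by
  obtain ⟨a, b, hab, -, rfl⟩ := h
  have key : P * (Equiv.swap a b * m * Equiv.swap a b)
      = Equiv.swap (P a) (P b) * (P * m * Equiv.swap a b) := by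
    have e1 : P * Equiv.swap a b = Equiv.swap (P a) (P b) * P :=
      Equiv.mul_swap_eq_swap_mul P a b
    calc P * (Equiv.swap a b * m * Equiv.swap a b)
        = (P * Equiv.swap a b) * m * Equiv.swap a b := by group
      _ = (Equiv.swap (P a) (P b) * P) * m * Equiv.swap a b := by rw [e1]
      _ = Equiv.swap (P a) (P b) * (P * m * Equiv.swap a b) := by group
  rw [key]
  have hPab : P a ≠ P b := fun t => hab (P.injective t)
  have h1 := cq_swap_mul_le (P * m * Equiv.swap a b) hPab
  have h2 := cq_mul_swap_le (P * m) hab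
  omega

theorem chain_lower (P Q : Equiv.Perm V) (hP2 : P * P = 1) {k : ℕ}
    (hc : TwoBreakChain P Q k) : Fintype.card V ≤ cq (P * Q) + 2 * k := by
  obtain ⟨f, hf0, hfk, hstep⟩ := hc
  have main : ∀ i, i ≤ k → cq (P * f i) ≤ cq (P * f 0) + 2 * i := by
    intro i
    induction i with
    | zero => intro _; omega
    | succ n ih =>
      intro hn
      have h1 := cq_twoBreak_le P (hstep n (by omega))
      have h2 := ih (by omega)
      omega
  have hmain := main k le_rfl
  rw [hf0, hfk, hP2, cq_one] at hmain
  exact hmain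

theorem reach (P : Equiv.Perm V) (hP : IsPerfectMatching P) :
    ∀ d (m : Equiv.Perm V), IsPerfectMatching m →
      Fintype.card V - cq (P * m) ≤ d →
      ∃ j : ℕ, Fintype.card V = cq (P * m) + 2 * j ∧ TwoBreakChain P m j := by
  have hP2 : P * P = 1 := Equiv.ext fun v => by simpa using hP.1 v
  have hPinv : P⁻¹ = P := inv_eq_of_mul_eq_one_right hP2
  have base : ∀ m : Equiv.Perm V, m = P →
      ∃ j : ℕ, Fintype.card V = cq (P * m) + 2 * j ∧ TwoBreakChain P m j := by
    intro m hmP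
    refine ⟨0, ?_, fun _ => P, hmP.symm, rfl, fun i hi => absurd hi (by omega)⟩
    rw [hmP, hP2, cq_one]
    omega
  intro d
  induction d with
  | zero =>
    intro m hm hd
    have hle := cq_le (P * m)
    have hcq : cq (P * m) = Fintype.card V := by omega
    have hg1 : P * m = 1 := eq_one_of_cq_eq _ hcq
    refine base m ?_
    have : P * (P * m) = P * 1 := by rw [hg1]
    rwa [← mul_assoc, hP2, one_mul, mul_one] at this
  | succ n ih =>
    intro m hm hd
    by_cases hmP : m = P
    · exact base m hmP
    · obtain ⟨v, hv⟩ : ∃ v, m v ≠ P v := by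
        by_contra hno; push_neg at hno; exact hmP (Equiv.ext hno)
      have hminv : m⁻¹ = m := inv_eq_of_mul_eq_one_right
        (Equiv.ext fun u => by simpa using hm.1 u)
      set b := m (P v) with hb
      have hmb : m b = P v := by rw [hb]; exact hm.1 (P v)
      have hvb : v ≠ b := fun t =>
        hv (by rw [show m v = m b from congrArg m t, hmb])
      have hmvb : m v ≠ b := by
        intro t
        have h3 : v = P v := m.injective (t.trans hb)
        exact hP.2 v h3.symm
      set m' := Equiv.swap v b * m * Equiv.swap v b with hm'
      have htb : TwoBreak m m' := ⟨v, b, hvb, hmvb, rfl⟩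
      have hm'match : IsPerfectMatching m' := by
        constructor
        · intro u
          simp only [hm', Equiv.Perm.mul_apply]
          rw [Equiv.swap_apply_self, hm.1, Equiv.swap_apply_self]
        · intro u hq
          simp only [hm', Equiv.Perm.mul_apply] at hq
          have h4 := congrArg (Equiv.swap v b) hq
          rw [Equiv.swap_apply_self] at h4
          exact hm.2 _ h4
      set g := P * m with hg
      have hPP : ∀ u, P (P u) = u := hP.1
      have hgv : g v ≠ v := by
        intro t
        apply hv
        have h5 : P (P (m v)) = P v := congrArg P t
        rwa [hPP] at h5
      have hginvv : g⁻¹ v = b := by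
        rw [hg, mul_inv_rev, hPinv, hminv, Equiv.Perm.mul_apply, hb]
      set h1 := g * Equiv.swap v b with hh1
      have key1 : cq h1 = cq g + 1 := by
        rw [hh1, show Equiv.swap v b = Equiv.swap v (g⁻¹ v) from by rw [hginvv]]
        exact cq_excise g hgv
      set w := P v with hw
      have hwv : w ≠ v := fun t => hP.2 v t
      have hwb : w ≠ b := by
        intro t
        exact hm.2 (P v) (by rw [← hb, ← t])
      have h1w : h1 w = g w := by
        rw [hh1, Equiv.Perm.mul_apply, Equiv.swap_apply_of_ne_of_ne hwv hwb]
      have hgwPb : g w = P b := by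
        rw [hg, Equiv.Perm.mul_apply, hw, ← hb]
      have hgw : g w ≠ w := by
        rw [hgwPb, hw]
        intro t
        exact hvb (P.injective t).symm
      have key2 : cq (Equiv.swap w (h1 w) * h1) = cq h1 + 1 :=
        cq_excise_left h1 (by rw [h1w]; exact hgw)
      have hkey : P * m' = Equiv.swap w (h1 w) * h1 := by
        rw [show Equiv.swap w (h1 w) = Equiv.swap (P v) (P b) from by rw [h1w, hgwPb, hw],
          hm', hh1, hg]
        have e1 : P * Equiv.swap v b = Equiv.swap (P v) (P b) * P :=
          Equiv.mul_swap_eq_swap_mul P v b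
        calc P * (Equiv.swap v b * m * Equiv.swap v b)
            = (P * Equiv.swap v b) * m * Equiv.swap v b := by group
          _ = (Equiv.swap (P v) (P b) * P) * m * Equiv.swap v b := by rw [e1]
          _ = Equiv.swap (P v) (P b) * (P * m * Equiv.swap v b) := by group
      have hcq' : cq (P * m') = cq g + 2 := by
        rw [hkey, key2, key1]
      have hle' := cq_le (P * m')
      obtain ⟨j, hj1, f', hf0, hfk, hfs⟩ := ih m' hm'match (by rw [hcq']; omega)
      rw [hcq'] at hj1
      refine ⟨j + 1, by omega, ?_⟩
      refine ⟨fun i => if i = 0 then m else f' (i - 1), by simp, by simp [hfk], ?_⟩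
      intro i hi
      by_cases hi0 : i = 0
      · subst hi0
        simpa [hf0] using htb
      · have e2 : i - 1 + 1 = i := by omega
        have := hfs (i - 1) (by omega)
        rw [e2] at this
        simpa [hi0] using this


end TwoBreakAux

/-- The 2-break distance between circular genomes P and Q on the same
n = |V|/2 blocks equals n - c(P,Q), where c(P,Q) is the number of alternating
black-red cycles of the breakpoint graph. -/
theorem twoBreak_distance {V : Type*} [Fintype V] [DecidableEq V]
    (P Q : Equiv.Perm V) (hP : IsPerfectMatching P) (hQ : IsPerfectMatching Q) :
    sInf {k : ℕ | TwoBreakChain P Q k} = Fintype.card V / 2 - bpCycles P Q := by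

  classical
  have hP2 : P * P = 1 := Equiv.ext fun v => by simpa using hP.1 v
  obtain ⟨j, hj, hchain⟩ := reach P hP (Fintype.card V) Q hQ (by omega)
  have hlow : ∀ k ∈ {k : ℕ | TwoBreakChain P Q k}, j ≤ k := by
    intro k hk
    have := chain_lower P Q hP2 hk
    omega
  have hinf : sInf {k : ℕ | TwoBreakChain P Q k} = j :=
    le_antisymm (Nat.sInf_le hchain) (le_csInf ⟨j, hchain⟩ hlow)
  rw [hinf]
  have hbp : bpCycles P Q = cq (P * Q) / 2 := by
    unfold bpCycles
    rw [cq_eq]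
  have heven := card_even P hP
  rw [hbp]
  omega
end

section
/- A single 3-break applied to the red matching can increase the number of alternating cycles in the breakpoint graph by at most 2. -/
open Equiv Equiv.Perm


/-- The number of `ℓ`-cycles (alternating cycles with `ℓ` black and `ℓ` red
edges) of the breakpoint graph: half the number of orbits of size `ℓ` of
`black * red`. -/
def bpCyclesOfLen {V : Type*} [Fintype V] [DecidableEq V]
    (black red : Equiv.Perm V) (ℓ : ℕ) : ℕ :=
  if ℓ = 1 then (Fintype.card V - (black * red).support.card) / 2
  else (black * red).cycleType.count ℓ / 2


/-- A 3-break on the matching `m`: the red edges inside a set `s` of at most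
six vertices (closed under `m`, i.e. a union of at most three red edges) are
replaced by another perfect matching on the same vertices; edges outside `s`
are untouched. -/
def ThreeBreak {V : Type*} (m m' : Equiv.Perm V) : Prop :=
  ∃ s : Finset V, s.card ≤ 6 ∧ (∀ v ∈ s, m v ∈ s) ∧ ∀ v ∉ s, m' v = m v

open Equiv Equiv.Perm

def scSetoid {V : Type*} (π : Equiv.Perm V) : Setoid V :=
  ⟨π.SameCycle, ⟨fun x => SameCycle.refl π x, fun h => h.symm, fun h h' => h.trans h'⟩⟩

noncomputable def orbitCount {V : Type*} (π : Equiv.Perm V) : ℕ :=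
  Nat.card (Quotient (scSetoid π))

lemma orbitCount_eq {V : Type*} [Fintype V] [DecidableEq V] (π : Equiv.Perm V) :
    orbitCount π = π.cycleType.card + (Fintype.card V - π.support.card) := by
  classical
  have hg : ∀ v : V, v ∈ π.support → π.cycleOf v ∈ π.cycleFactorsFinset := fun v h =>
    cycleOf_mem_cycleFactorsFinset_iff.mpr h
  let g : V → (↥π.cycleFactorsFinset ⊕ {v : V // v ∉ π.support}) := fun v =>
    if h : v ∈ π.support then Sum.inl ⟨π.cycleOf v, hg v h⟩ else Sum.inr ⟨v, h⟩
  have hwd : ∀ v w : V, π.SameCycle v w → g v = g w := by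
    intro v w hvw
    by_cases hv : v ∈ π.support
    · have hw : w ∈ π.support := by
        by_contra hw
        have h1 : π.cycleOf w = 1 := (cycleOf_eq_one_iff π).mpr (notMem_support.mp hw)
        rw [← hvw.cycleOf_eq] at h1
        exact (notMem_support.mpr ((cycleOf_eq_one_iff π).mp h1)) hv
      show dite _ _ _ = dite _ _ _
      rw [dif_pos hv, dif_pos hw]
      exact congrArg _ (Subtype.ext hvw.cycleOf_eq)
    · have hfix : π v = v := notMem_support.mp hv
      obtain ⟨i, hi⟩ := hvw
      have : w = v := by rw [← hi, zpow_apply_eq_self_of_apply_eq_self hfix]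
      subst this; rfl
  let f : Quotient (scSetoid π) → (↥π.cycleFactorsFinset ⊕ {v : V // v ∉ π.support}) :=
    Quotient.lift g hwd
  have hinj : Function.Injective f := by
    intro q r
    induction q using Quotient.ind with | _ a =>
    induction r using Quotient.ind with | _ b =>
    intro hab
    apply Quotient.sound
    change g a = g b at hab
    show π.SameCycle a b
    by_cases ha : a ∈ π.support <;> by_cases hb : b ∈ π.support <;>
        [rw [show g a = _ from dif_pos ha, show g b = _ from dif_pos hb] at hab;
         rw [show g a = _ from dif_pos ha, show g b = _ from dif_neg hb] at hab;
         rw [show g a = _ from dif_neg ha, show g b = _ from dif_pos hb] at hab;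
         rw [show g a = _ from dif_neg ha, show g b = _ from dif_neg hb] at hab]
    · simp only [Sum.inl.injEq, Subtype.mk.injEq] at hab
      have hbmem : b ∈ (π.cycleOf b).support :=
        mem_support_cycleOf_iff.mpr ⟨SameCycle.refl π b, hb⟩
      rw [← hab] at hbmem
      exact (mem_support_cycleOf_iff.mp hbmem).1
    · exact absurd hab (by simp)
    · exact absurd hab (by simp)
    · simp only [Sum.inr.injEq, Subtype.mk.injEq] at hab
      exact hab ▸ SameCycle.refl π b
  have hsurj : Function.Surjective f := by
    rintro (⟨c, hc⟩ | ⟨v, hv⟩)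
    · obtain ⟨x, hx, -⟩ := (mem_cycleFactorsFinset_iff.mp hc).1
      have hxc : x ∈ c.support := mem_support.mpr hx
      have hπx : π x = c x := ((mem_cycleFactorsFinset_iff.mp hc).2 x hxc).symm
      have hxs : x ∈ π.support := mem_support.mpr (by rw [hπx]; exact hx)
      refine ⟨Quotient.mk _ x, ?_⟩
      show g x = _
      rw [show g x = _ from dif_pos hxs]
      exact congrArg _ (Subtype.ext (cycle_is_cycleOf hxc hc).symm)
    · exact ⟨Quotient.mk _ v, show g v = _ from dif_neg hv⟩
  have hcard := Nat.card_congr (Equiv.ofBijective f ⟨hinj, hsurj⟩)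
  rw [orbitCount, hcard, Nat.card_sum, Nat.card_eq_fintype_card, Nat.card_eq_fintype_card,
    Fintype.card_coe, Fintype.card_subtype_compl, Fintype.card_coe]
  congr 1
  rw [cycleType_def, Multiset.card_map]
  rfl


lemma even_natCard_of_involutive {α : Type*} (f : α → α)
    (h1 : ∀ a, f (f a) = a) (h2 : ∀ a, f a ≠ a) : Even (Nat.card α) := by
  classical
  cases finite_or_infinite α
  · cases nonempty_fintype α
    let g : Equiv.Perm α := ⟨f, f, h1, h1⟩
    have hg2 : g * g = 1 := by
      ext a; exact h1 a
    have horder : orderOf g ∣ 2 := orderOf_dvd_of_pow_eq_one (by rw [pow_two]; exact hg2)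
    have hall : ∀ n ∈ g.cycleType, n = 2 := by
      intro n hn
      have h2le : 2 ≤ n := two_le_of_mem_cycleType hn
      have hdvd : n ∣ 2 := (Multiset.dvd_lcm hn).trans (by rw [g.lcm_cycleType]; exact horder)
      exact le_antisymm (Nat.le_of_dvd two_pos hdvd) h2le
    have hsupp : g.support = Finset.univ := Finset.eq_univ_iff_forall.mpr fun a =>
      mem_support.mpr (h2 a)
    have hsum : g.cycleType.sum = Fintype.card α := by
      rw [sum_cycleType, hsupp, Finset.card_univ]
    rw [Nat.card_eq_fintype_card, ← hsum]
    rw [even_iff_two_dvd]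
    exact Multiset.dvd_sum fun n hn => by rw [hall n hn]
  · simp [Nat.card_eq_zero_of_infinite]


section
variable {V : Type*} (black red : Equiv.Perm V)
  (hB : IsPerfectMatching black) (hR : IsPerfectMatching red)

include hB hR

lemma conj_black (i : ℤ) (v : V) :
    black (((black * red) ^ i) v) = ((black * red) ^ (-i)) (black v) := by
  have hb1 : black * black = 1 := Equiv.ext fun v => hB.1 v
  have hr1 : red * red = 1 := Equiv.ext fun v => hR.1 v
  have hbinv : black⁻¹ = black := inv_eq_of_mul_eq_one_left hb1
  have hconj : black * (black * red) * black⁻¹ = (black * red)⁻¹ := by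
    rw [hbinv, mul_inv_rev]
    rw [inv_eq_of_mul_eq_one_left hb1, inv_eq_of_mul_eq_one_left hr1]
    rw [← mul_assoc, hb1, one_mul]
  have h2 : black * (black * red) ^ i * black⁻¹ = (black * red) ^ (-i) := by
    have := map_zpow (MulAut.conj black) (black * red) i
    simp only [MulAut.conj_apply] at this
    rw [this, hconj]
    exact inv_zpow' _ i
  have h3 := congrArg (fun (p : Equiv.Perm V) => p (black v)) h2
  simp only [Equiv.Perm.mul_apply] at h3
  rw [hbinv] at h3
  rw [hB.1 v] at h3
  exact h3

lemma sameCycle_black {v w : V} (h : (black * red).SameCycle v w) :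
    (black * red).SameCycle (black v) (black w) := by
  obtain ⟨i, hi⟩ := h
  exact ⟨-i, by rw [← conj_black black red hB hR, hi]⟩

lemma not_sameCycle_black (v : V) : ¬ (black * red).SameCycle v (black v) := by
  rintro ⟨k, hk⟩
  set π := black * red with hπ
  have hb1 : black * black = 1 := Equiv.ext fun v => hB.1 v
  have hred : red = black * π := by
    rw [hπ, ← mul_assoc, hb1, one_mul]
  rcases Int.even_or_odd k with ⟨j, hj⟩ | ⟨j, hj⟩
  · -- k = j + j : black fixes π^j v
    apply hB.2 ((π ^ j) v)
    rw [conj_black black red hB hR, ← hk, ← Equiv.Perm.mul_apply, ← zpow_add]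
    rw [show -j + k = j by omega]
  · -- k = 2j+1 : red fixes π^j v
    apply hR.2 ((π ^ j) v)
    have h1 : red ((π ^ j) v) = black ((π ^ (j + 1)) v) := by
      rw [hred]
      rw [Equiv.Perm.mul_apply]
      congr 1
      rw [← Equiv.Perm.mul_apply, ← zpow_one_add, add_comm]
    rw [h1, conj_black black red hB hR, ← hk, ← Equiv.Perm.mul_apply, ← zpow_add]
    rw [show -(j + 1) + k = j by omega]

lemma even_orbitCount : Even (orbitCount (black * red)) := by
  set π := black * red with hπ
  let B : Quotient (scSetoid π) → Quotient (scSetoid π) :=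
    Quotient.map black (fun v w h => sameCycle_black black red hB hR h)
  apply even_natCard_of_involutive B
  · intro q
    induction q using Quotient.ind with | _ v =>
    show Quotient.mk _ (black (black v)) = Quotient.mk _ v
    rw [hB.1 v]
  · intro q
    induction q using Quotient.ind with | _ v =>
    show Quotient.mk _ (black v) ≠ Quotient.mk _ v
    intro hq
    exact not_sameCycle_black black red hB hR v ((Quotient.exact hq).symm)

end


lemma orbitCount_mul_le {V : Type*} [Fintype V] [DecidableEq V] (π σ : Equiv.Perm V)
    (hσ : σ ≠ 1) : orbitCount (π * σ) + 1 ≤ orbitCount π + σ.support.card := by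
  classical
  set τ := π * σ with hτ
  have key : ∀ v : V, (∀ k : ℤ, (τ ^ k) v ∉ σ.support) → ∀ k : ℤ, (τ ^ k) v = (π ^ k) v := by
    intro v hv k
    induction k using Int.induction_on with
    | zero => simp
    | succ k ih =>
      have h1 : τ ^ ((k : ℤ) + 1) = τ * τ ^ (k : ℤ) := by rw [add_comm, zpow_add, zpow_one]
      have h2 : π ^ ((k : ℤ) + 1) = π * π ^ (k : ℤ) := by rw [add_comm, zpow_add, zpow_one]
      have hfix : σ ((τ ^ (k : ℤ)) v) = (τ ^ (k : ℤ)) v := notMem_support.mp (hv k)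
      rw [h1, h2, Equiv.Perm.mul_apply, Equiv.Perm.mul_apply]
      show (π * σ) _ = _
      rw [Equiv.Perm.mul_apply, hfix, ih, Equiv.Perm.mul_apply]
    | pred k ih =>
      have h1 : τ * τ ^ (-(k : ℤ) - 1) = τ ^ (-(k : ℤ)) := by
        rw [← zpow_one_add, show (1 + (-(k : ℤ) - 1)) = -(k : ℤ) by ring]
      set w := (τ ^ (-(k : ℤ) - 1)) v with hw
      have hτw : τ w = (τ ^ (-(k : ℤ))) v := by rw [hw, ← Equiv.Perm.mul_apply, h1]
      have hfixw : σ w = w := notMem_support.mp (hv _)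
      have hπw : π w = (π ^ (-(k : ℤ))) v := by
        rw [← ih, ← hτw, hτ, Equiv.Perm.mul_apply, hfixw]
      have h2 : π ((π ^ (-(k : ℤ) - 1)) v) = (π ^ (-(k : ℤ))) v := by
        rw [← Equiv.Perm.mul_apply, ← zpow_one_add, show (1 + (-(k : ℤ) - 1)) = -(k : ℤ) by ring]
      exact π.injective (by rw [hπw, h2])
  have transfer : ∀ v w : V, (∀ k : ℤ, (τ ^ k) v ∉ σ.support) →
      (π.SameCycle v w ↔ τ.SameCycle v w) := by
    rintro v w hv
    constructor
    · rintro ⟨i, hi⟩; exact ⟨i, by rw [key v hv i, hi]⟩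
    · rintro ⟨i, hi⟩; exact ⟨i, by rw [← key v hv i, hi]⟩
  letI : Fintype (Quotient (scSetoid τ)) := Fintype.ofFinite _
  letI : Fintype (Quotient (scSetoid π)) := Fintype.ofFinite _
  obtain ⟨u, hu⟩ : ∃ u, u ∈ σ.support := by
    by_contra hc
    push_neg at hc
    exact hσ (support_eq_empty_iff.mp (Finset.eq_empty_of_forall_notMem hc))
  set meets : Quotient (scSetoid τ) → Prop := fun q => ∃ w ∈ σ.support, Quotient.mk _ w = q
    with hmeets
  set A : Finset (Quotient (scSetoid τ)) := Finset.univ.filter meets with hA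
  set B : Finset (Quotient (scSetoid τ)) := Finset.univ.filter (fun q => ¬ meets q) with hB
  have hAcard : A.card ≤ σ.support.card := by
    apply Finset.card_le_card_of_surjOn (fun w => Quotient.mk (scSetoid τ) w)
    intro q hq
    obtain ⟨w, hw, hwq⟩ := (Finset.mem_filter.mp hq).2
    exact ⟨w, hw, hwq⟩
  have havoid : ∀ q ∈ B, ∀ k : ℤ, (τ ^ k) (Quotient.out q) ∉ σ.support := by
    intro q hq k hk
    refine (Finset.mem_filter.mp hq).2 ⟨(τ ^ k) (Quotient.out q), hk, ?_⟩
    conv_rhs => rw [← Quotient.out_eq q]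
    refine Quotient.sound ⟨-k, ?_⟩
    rw [← Equiv.Perm.mul_apply, ← zpow_add, neg_add_cancel, zpow_zero, Equiv.Perm.one_apply]
  set G : Quotient (scSetoid τ) → Quotient (scSetoid π) :=
    fun q => Quotient.mk (scSetoid π) (Quotient.out q) with hG
  have hinj : Set.InjOn G B := by
    intro q hq r hr hqr
    have h1 : π.SameCycle (Quotient.out q) (Quotient.out r) := Quotient.exact hqr
    have h2 : τ.SameCycle (Quotient.out q) (Quotient.out r) :=
      (transfer _ _ (havoid q hq)).mp h1
    rw [← Quotient.out_eq q, ← Quotient.out_eq r]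
    exact Quotient.sound h2
  have hmiss : ∀ q ∈ B, G q ≠ Quotient.mk (scSetoid π) u := by
    intro q hq hqu
    have h1 : π.SameCycle (Quotient.out q) u := Quotient.exact hqu
    have h2 : τ.SameCycle (Quotient.out q) u := (transfer _ _ (havoid q hq)).mp h1
    refine (Finset.mem_filter.mp hq).2 ⟨u, hu, ?_⟩
    rw [← Quotient.out_eq q]
    exact (Quotient.sound h2).symm
  have himg : B.image G ⊆ Finset.univ.erase (Quotient.mk (scSetoid π) u) := by
    intro x hx
    obtain ⟨q, hq, hqx⟩ := Finset.mem_image.mp hx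
    exact Finset.mem_erase.mpr ⟨hqx ▸ hmiss q hq, Finset.mem_univ _⟩
  have hBcard : B.card ≤ Fintype.card (Quotient (scSetoid π)) - 1 := by
    calc B.card = (B.image G).card := (Finset.card_image_of_injOn hinj).symm
    _ ≤ (Finset.univ.erase (Quotient.mk (scSetoid π) u)).card := Finset.card_le_card himg
    _ = Fintype.card (Quotient (scSetoid π)) - 1 := by
        rw [Finset.card_erase_of_mem (Finset.mem_univ _), Finset.card_univ]
  have hsplit : A.card + B.card = Fintype.card (Quotient (scSetoid τ)) := by
    rw [hA, hB, Finset.card_filter_add_card_filter_not, Finset.card_univ]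
  have hpos : 1 ≤ Fintype.card (Quotient (scSetoid π)) :=
    Fintype.card_pos_iff.mpr ⟨Quotient.mk (scSetoid π) u⟩
  have e1 : orbitCount τ = Fintype.card (Quotient (scSetoid τ)) := Nat.card_eq_fintype_card
  have e2 : orbitCount π = Fintype.card (Quotient (scSetoid π)) := Nat.card_eq_fintype_card
  omega

/-- A single 3-break applied to the red matching increases the number of
alternating cycles of the breakpoint graph by at most 2. -/
theorem threeBreak_cycles_increase_le_two {V : Type*} [Fintype V] [DecidableEq V]
    (black red red' : Equiv.Perm V)
    (hB : IsPerfectMatching black) (hR : IsPerfectMatching red)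
    (hR' : IsPerfectMatching red') (h : ThreeBreak red red') :
    bpCycles black red' ≤ bpCycles black red + 2 := by
  classical
  obtain ⟨s, hs6, -, hfix⟩ := h
  set σ : Equiv.Perm V := red⁻¹ * red' with hσdef
  have hmul : black * red' = (black * red) * σ := by
    rw [hσdef, mul_assoc, mul_inv_cancel_left]
  have hsupp : σ.support ⊆ s := by
    intro v hv
    by_contra hvs
    refine (mem_support.mp hv) ?_
    show red⁻¹ (red' v) = v
    rw [hfix v hvs, ← Equiv.Perm.mul_apply, inv_mul_cancel, Equiv.Perm.one_apply]
  have hcard6 : σ.support.card ≤ 6 := le_trans (Finset.card_le_card hsupp) hs6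
  by_cases h1 : σ = 1
  · have hrr : red = red' := inv_mul_eq_one.mp h1
    rw [← hrr]
    exact Nat.le_add_right _ 2
  · have hineq := orbitCount_mul_le (black * red) σ h1
    obtain ⟨a, ha⟩ := even_orbitCount black red hB hR
    obtain ⟨b, hb⟩ := even_orbitCount black red' hB hR'
    have hkey : orbitCount (black * red') + 1 ≤ orbitCount (black * red) + 6 := by
      rw [hmul]; omega
    unfold bpCycles
    rw [← orbitCount_eq (black * red'), ← orbitCount_eq (black * red)]
    omega
end

section
/- The minimum number of 3-breaks (where 2-breaks count as special 3-breaks) needed to transform red matching Q into black matching P is at least (n - c(P,Q))/2, where c(P,Q) is the number of alternating cycles. -/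
set_option linter.unusedSectionVars false
set_option linter.unusedVariables false
set_option maxHeartbeats 1000000
open Equiv Perm Module


/-- A scenario of k 3-breaks (2-breaks being special 3-breaks) transforming
the red matching Q into the black matching P, all intermediate genomes being
perfect matchings. -/
def ThreeBreakChain {V : Type*} (P Q : Equiv.Perm V) (k : ℕ) : Prop :=
  ∃ f : ℕ → Equiv.Perm V, f 0 = Q ∧ f k = P ∧
    ∀ i < k, IsPerfectMatching (f (i + 1)) ∧ ThreeBreak (f i) (f (i + 1))


section Aux

variable {V : Type*} [Fintype V] [DecidableEq V]

noncomputable def pLin (σ : Equiv.Perm V) : (V → ℚ) →ₗ[ℚ] (V → ℚ) :=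
  LinearMap.funLeft ℚ ℚ σ

noncomputable def Fr (σ : Equiv.Perm V) : ℕ :=
  finrank ℚ (LinearMap.range (pLin σ - LinearMap.id))

lemma pLin_mul (σ τ : Equiv.Perm V) : pLin (σ * τ) = (pLin τ).comp (pLin σ) := by
  rw [pLin, pLin, pLin, ← LinearMap.funLeft_comp]
  rfl

lemma Fr_one : Fr (1 : Equiv.Perm V) = 0 := by
  have : pLin (1 : Equiv.Perm V) = LinearMap.id := by
    ext x v; simp [pLin, LinearMap.funLeft_apply]
  simp [Fr, this]

lemma Fr_mul_le (σ τ : Equiv.Perm V) : Fr (σ * τ) ≤ Fr σ + Fr τ := by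
  have hdec : pLin (σ * τ) - LinearMap.id
      = (pLin τ - LinearMap.id).comp (pLin σ) + (pLin σ - LinearMap.id) := by
    rw [pLin_mul]; ext x v; simp
  have hle : LinearMap.range (pLin (σ * τ) - LinearMap.id)
      ≤ LinearMap.range (pLin σ - LinearMap.id) ⊔ LinearMap.range (pLin τ - LinearMap.id) := by
    rw [hdec]
    rintro _ ⟨x, rfl⟩
    exact Submodule.add_mem _
      (Submodule.mem_sup_right ⟨pLin σ x, rfl⟩)
      (Submodule.mem_sup_left ⟨x, rfl⟩)
  exact le_trans (Submodule.finrank_mono hle)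
    (Submodule.finrank_add_le_finrank_add_finrank _ _)

lemma Fr_swap_le (a b : V) : Fr (Equiv.swap a b) ≤ 1 := by
  by_cases hab : a = b
  · subst hab; simp [Equiv.swap_self]
    have : (Equiv.refl V : Equiv.Perm V) = 1 := rfl
    rw [this, Fr_one]; omega
  · set g : V → ℚ := Pi.single a (1:ℚ) - Pi.single b 1 with hg
    have hle : LinearMap.range (pLin (Equiv.swap a b) - LinearMap.id)
        ≤ Submodule.span ℚ {g} := by
      rintro _ ⟨x, rfl⟩
      refine Submodule.mem_span_singleton.2 ⟨x b - x a, ?_⟩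
      funext v
      simp only [LinearMap.sub_apply, LinearMap.id_apply, pLin, LinearMap.funLeft_apply,
        Pi.sub_apply, Pi.smul_apply, hg, Pi.single_apply, smul_eq_mul]
      by_cases hva : v = a
      · subst hva; rw [Equiv.swap_apply_left]; simp [hab]
      · by_cases hvb : v = b
        · subst hvb; rw [Equiv.swap_apply_right]; simp [Ne.symm hab]
        · rw [Equiv.swap_apply_of_ne_of_ne hva hvb]; simp [hva, hvb]
    refine le_trans (Submodule.finrank_mono hle) ?_
    by_cases hgz : g = 0
    · rw [hgz, Submodule.span_zero_singleton]; simp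
    · rw [finrank_span_singleton hgz]

lemma Fr_list_prod_le (l : List (Equiv.Perm V)) (hl : ∀ t ∈ l, t.IsSwap) :
    Fr l.prod ≤ l.length := by
  induction l with
  | nil => simpa using Fr_one.le
  | cons t l ih =>
    obtain ⟨a, b, -, rfl⟩ := hl t List.mem_cons_self
    calc Fr (List.prod (Equiv.swap a b :: l)) = Fr (Equiv.swap a b * l.prod) := by
          rw [List.prod_cons]
      _ ≤ Fr (Equiv.swap a b) + Fr l.prod := Fr_mul_le _ _
      _ ≤ 1 + l.length := add_le_add (Fr_swap_le a b) (ih fun t ht => hl t (List.mem_cons_of_mem _ ht))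
      _ = (Equiv.swap a b :: l).length := by simp [add_comm]

lemma exists_swap_list (σ : Equiv.Perm V) :
    ∃ l : List (Equiv.Perm V), (∀ t ∈ l, t.IsSwap) ∧ l.prod = σ ∧
      l.length ≤ σ.support.card - 1 := by
  generalize hn : σ.support.card = n
  induction n using Nat.strong_induction_on generalizing σ with
  | _ n ih =>
    by_cases h1 : σ = 1
    · exact ⟨[], by simp, by simp [h1], by simp⟩
    · obtain ⟨x, hx⟩ : ∃ x, σ x ≠ x := by
        by_contra hc
        push_neg at hc
        exact h1 (Equiv.ext hc)
      set σ' := Equiv.swap x (σ x) * σ with hσ'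
      have hlt : σ'.support.card < n := hn ▸ Equiv.Perm.card_support_swap_mul hx
      obtain ⟨l, hls, hlp, hll⟩ := ih σ'.support.card hlt σ' rfl
      have hs2 : 2 ≤ n := by
        rcases Nat.lt_or_ge n 2 with h | h
        · exfalso
          interval_cases n
          · rw [Finset.card_eq_zero] at hn
            exact (Finset.eq_empty_iff_forall_notMem.1 hn x) (Equiv.Perm.mem_support.2 hx)
          · exact σ.card_support_ne_one hn
        · exact h
      have hne : σ'.support.card ≠ 1 := σ'.card_support_ne_one
      refine ⟨Equiv.swap x (σ x) :: l, ?_, ?_, ?_⟩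
      · rintro t ht
        rcases List.mem_cons.1 ht with rfl | ht
        · exact ⟨x, σ x, Ne.symm hx, rfl⟩
        · exact hls t ht
      · rw [List.prod_cons, hlp, hσ', ← mul_assoc, Equiv.swap_mul_self, one_mul]
      · simp only [List.length_cons]
        omega

lemma Fr_le_four {τ : Equiv.Perm V} (hs : τ.support.card ≤ 6)
    (hsign : Equiv.Perm.sign τ = 1) : Fr τ ≤ 4 := by
  obtain ⟨l, hls, hlp, hll⟩ := exists_swap_list τ
  have hlen5 : l.length ≤ 5 := by omega
  have heven : Even l.length := by
    have := Equiv.Perm.sign_prod_list_swap hls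
    rw [hlp, hsign] at this
    rcases Nat.even_or_odd l.length with h | h
    · exact h
    · exfalso
      rw [Odd.neg_one_pow h] at this
      exact (by decide : ¬((-1 : ℤˣ) = 1)) this.symm
  have : l.length ≤ 4 := by
    obtain ⟨c, hc⟩ := heven
    omega
  exact hlp ▸ le_trans (Fr_list_prod_le l hls) this

lemma pm_mul_self {m : Equiv.Perm V} (hm : IsPerfectMatching m) : m * m = 1 :=
  Equiv.ext hm.1

lemma pm_sign {m : Equiv.Perm V} (hm : IsPerfectMatching m) :
    Equiv.Perm.sign m = (-1 : ℤˣ) ^ (Fintype.card V / 2) := by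
  by_cases h1 : m = 1
  · have hV : Fintype.card V = 0 := by
      by_contra h
      obtain ⟨v⟩ := Fintype.card_pos_iff.1 (Nat.pos_of_ne_zero h)
      exact hm.2 v (by rw [h1]; rfl)
    rw [h1, hV]
    simp
  · have horder : orderOf m = 2 :=
      orderOf_eq_prime (by rw [sq]; exact pm_mul_self hm) h1
    have htwo : ∀ n ∈ m.cycleType, n = 2 := by
      intro n hn
      have h2 : 2 ≤ n := Equiv.Perm.two_le_of_mem_cycleType hn
      have hdvd : n ∣ 2 := by
        rw [← horder, ← Equiv.Perm.lcm_cycleType]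
        exact Multiset.dvd_lcm hn
      exact le_antisymm (Nat.le_of_dvd (by norm_num) hdvd) h2
    have hsupp : m.support = Finset.univ := by
      ext v; simp [Equiv.Perm.mem_support, hm.2 v]
    have hsum : m.cycleType.sum = Fintype.card V := by
      rw [Equiv.Perm.sum_cycleType, hsupp, Finset.card_univ]
    have hsum2 : m.cycleType.sum = Multiset.card m.cycleType * 2 := by
      conv_lhs => rw [Multiset.eq_replicate_of_mem htwo]
      rw [Multiset.sum_replicate, smul_eq_mul, mul_comm]
    have hcard : Multiset.card m.cycleType = Fintype.card V / 2 := by omega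
    rw [Equiv.Perm.sign_of_cycleType']
    have : m.cycleType.map (fun n => -(-1 : ℤˣ) ^ n) = Multiset.replicate (Fintype.card V / 2) (-1) := by
      rw [← hcard, Multiset.eq_replicate]
      constructor
      · rw [Multiset.card_map]
      · intro b hb
        obtain ⟨n, hn, rfl⟩ := Multiset.mem_map.1 hb
        rw [htwo n hn]; decide
    rw [this, Multiset.prod_replicate]

lemma ker_dim_le (σ : Equiv.Perm V) :
    finrank ℚ ↥(LinearMap.ker (pLin σ - LinearMap.id)) ≤
      Multiset.card σ.cycleType + (Fintype.card V - σ.support.card) := by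
  classical
  have hpick : ∀ c : {c // c ∈ σ.cycleFactorsFinset}, c.1.support.Nonempty := by
    rintro ⟨c, hc⟩
    exact (Equiv.Perm.mem_cycleFactorsFinset_iff.1 hc).1.nonempty_support
  set pick : {c // c ∈ σ.cycleFactorsFinset} → V :=
    fun c => (hpick c).choose with hpickdef
  have hpickmem : ∀ c : {c // c ∈ σ.cycleFactorsFinset}, pick c ∈ c.1.support :=
    fun c => (hpick c).choose_spec
  set T : Finset V := σ.cycleFactorsFinset.attach.image pick ∪ σ.supportᶜ with hT
  have hcardT : T.card ≤ Multiset.card σ.cycleType + (Fintype.card V - σ.support.card) := by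
    refine le_trans (Finset.card_union_le _ _) (add_le_add ?_ ?_)
    · refine le_trans (Finset.card_image_le) ?_
      rw [Finset.card_attach, Equiv.Perm.cycleType_def, Multiset.card_map]
      rfl
    · rw [Finset.card_compl]
  -- the evaluation map on T is injective on the kernel
  set K := LinearMap.ker (pLin σ - LinearMap.id) with hK
  set φ : K →ₗ[ℚ] (T → ℚ) :=
    (LinearMap.funLeft ℚ ℚ (fun t : T => (t : V))).comp K.subtype with hφ
  have hinj : Function.Injective φ := by
    rw [← LinearMap.ker_eq_bot]
    rw [Submodule.eq_bot_iff]
    rintro ⟨x, hx⟩ hker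
    have hfix : ∀ v, x (σ v) = x v := by
      intro v
      have := congrFun (LinearMap.mem_ker.1 hx) v
      simp only [LinearMap.sub_apply, LinearMap.id_apply, pLin, LinearMap.funLeft_apply,
        Pi.sub_apply, Pi.zero_apply] at this
      linarith
    have hpow : ∀ (n : ℕ) (v : V), x ((σ ^ n) v) = x v := by
      intro n
      induction n with
      | zero => simp
      | succ n ih =>
        intro v
        rw [pow_succ, Equiv.Perm.mul_apply, ih (σ v), hfix]
    have hT0 : ∀ t ∈ T, x t = 0 := by
      intro t ht
      have := congrFun hker ⟨t, ht⟩
      simpa [hφ, LinearMap.funLeft_apply] using this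
    have hx0 : ∀ v, x v = 0 := by
      intro v
      by_cases hv : σ v = v
      · exact hT0 v (Finset.mem_union_right _ (by simp [Equiv.Perm.mem_support, hv]))
      · have hvs : v ∈ σ.support := Equiv.Perm.mem_support.2 hv
        have hc : σ.cycleOf v ∈ σ.cycleFactorsFinset :=
          Equiv.Perm.cycleOf_mem_cycleFactorsFinset_iff.2 hvs
        set b := pick (⟨σ.cycleOf v, hc⟩ : {c // c ∈ σ.cycleFactorsFinset}) with hb
        have hbmem : b ∈ (σ.cycleOf v).support :=
          hpickmem (⟨σ.cycleOf v, hc⟩ : {c // c ∈ σ.cycleFactorsFinset})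
        have hsc : σ.SameCycle v b :=
          ((Equiv.Perm.mem_support_cycleOf_iff).1 hbmem).1
        obtain ⟨i, -, hi⟩ := hsc.exists_pow_eq'
        have hbT : b ∈ T := Finset.mem_union_left _
          (Finset.mem_image.2 ⟨(⟨σ.cycleOf v, hc⟩ : {c // c ∈ σ.cycleFactorsFinset}),
            Finset.mem_attach _ _, rfl⟩)
        rw [← hpow i v, hi]
        exact hT0 b hbT
    exact Subtype.ext (funext hx0)
  have := LinearMap.finrank_le_finrank_of_injective hinj
  rw [Module.finrank_pi ℚ] at this
  simpa using le_trans this (by simpa using hcardT)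

lemma Fr_rank_nullity (σ : Equiv.Perm V) :
    Fr σ + finrank ℚ ↥(LinearMap.ker (pLin σ - LinearMap.id)) = Fintype.card V := by
  have := LinearMap.finrank_range_add_finrank_ker (pLin σ - LinearMap.id)
  rwa [Module.finrank_pi ℚ] at this

lemma Fr_step {m m' : Equiv.Perm V} (hm : IsPerfectMatching m) (hm' : IsPerfectMatching m')
    (hb : ThreeBreak m m') : Fr (m' * m) ≤ 4 := by
  obtain ⟨s, hs6, hcl, hout⟩ := hb
  have hsupp : (m' * m).support ⊆ s := by
    intro v hv
    by_contra hvs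
    have hmv : m v ∉ s := by
      intro hmvs
      exact hvs (by simpa [hm.1 v] using hcl (m v) hmvs)
    have : (m' * m) v = v := by
      simp only [Equiv.Perm.mul_apply, hout (m v) hmv, hm.1 v]
    exact (Equiv.Perm.mem_support.1 hv) this
  have hsign : Equiv.Perm.sign (m' * m) = 1 := by
    rw [map_mul, pm_sign hm, pm_sign hm', Int.units_mul_self]
  exact Fr_le_four (le_trans (Finset.card_le_card hsupp) hs6) hsign

lemma Fr_chain {P : Equiv.Perm V} (hP : IsPerfectMatching P) :
    ∀ (k : ℕ) (Q : Equiv.Perm V), IsPerfectMatching Q → ThreeBreakChain P Q k →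
      Fr (P * Q) ≤ 4 * k := by
  intro k
  induction k with
  | zero =>
    rintro Q hQ ⟨f, h0, hk, -⟩
    have hpq : P = Q := by rw [← hk]; exact h0
    rw [hpq, pm_mul_self hQ, Fr_one]
  | succ k ih =>
    rintro Q hQ ⟨f, h0, hk, hstep⟩
    have h1 := hstep 0 (Nat.succ_pos k)
    set Q₁ := f 1 with hQ₁
    have hQ₁pm : IsPerfectMatching Q₁ := h1.1
    have hchain : ThreeBreakChain P Q₁ k :=
      ⟨fun i => f (i + 1), rfl, hk, fun i hi => hstep (i + 1) (by omega)⟩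
    have hIH := ih Q₁ hQ₁pm hchain
    have hbr : ThreeBreak Q Q₁ := by rw [← h0]; exact h1.2
    have hτ : Fr (Q₁ * Q) ≤ 4 := Fr_step hQ hQ₁pm hbr
    have hPQ : P * Q = (P * Q₁) * (Q₁ * Q) := by
      rw [mul_assoc, ← mul_assoc Q₁, pm_mul_self hQ₁pm, one_mul]
    calc Fr (P * Q) ≤ Fr (P * Q₁) + Fr (Q₁ * Q) := hPQ ▸ Fr_mul_le _ _
      _ ≤ 4 * k + 4 := add_le_add hIH hτ
      _ = 4 * (k + 1) := by ring

lemma exists_chain {P : Equiv.Perm V} (hP : IsPerfectMatching P) :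
    ∀ (Q : Equiv.Perm V), IsPerfectMatching Q → ∃ k, ThreeBreakChain P Q k := by
  have main : ∀ (n : ℕ) (Q : Equiv.Perm V), IsPerfectMatching Q →
      (Finset.univ.filter fun v => Q v ≠ P v).card = n → ∃ k, ThreeBreakChain P Q k := by
    intro n
    induction n using Nat.strong_induction_on with
    | _ n ih =>
      intro Q hQ hn
      by_cases hQP : Q = P
      · exact ⟨0, fun _ => P, hQP.symm, rfl, fun i hi => absurd hi (Nat.not_lt_zero i)⟩
      · obtain ⟨a, ha⟩ : ∃ a, Q a ≠ P a := by
          by_contra hc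
          push_neg at hc
          exact hQP (Equiv.ext hc)
        set b := Q a with hb
        set c := P a with hc
        set d := Q c with hd
        have hbc : b ≠ c := ha
        have hab : a ≠ b := fun h => hQ.2 a (by rw [← h] at hb; exact hb.symm)
        have hac : a ≠ c := fun h => hP.2 a (by rw [← h] at hc; exact hc.symm)
        have hQb : Q b = a := by rw [hb, hQ.1]
        have hQd : Q d = c := by rw [hd, hQ.1]
        have hPc : P c = a := by rw [hc, hP.1]
        have hda : d ≠ a := by
          intro h
          have h2 : Q c = Q b := by rw [hQb, ← hd]; exact h
          exact hbc (Q.injective h2).symm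
        have hdc : d ≠ c := fun h => hQ.2 c (by rw [← hd]; exact h)
        have hdb : d ≠ b := by
          intro h
          have h2 : Q c = Q a := by rw [← hd, ← hb]; exact h
          exact hac (Q.injective h2).symm
        set t : Equiv.Perm V := Equiv.swap b c with ht
        have htt : ∀ x, t (t x) = x := fun x => Equiv.swap_apply_self b c x
        have hta : t a = a := Equiv.swap_apply_of_ne_of_ne hab hac
        have htb : t b = c := Equiv.swap_apply_left b c
        have htc : t c = b := Equiv.swap_apply_right b c
        have htd : t d = d := Equiv.swap_apply_of_ne_of_ne hdb hdc
        set Q' : Equiv.Perm V := t * Q * t with hQ'def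
        have hQ'apply : ∀ v, Q' v = t (Q (t v)) := fun v => rfl
        have hQ'pm : IsPerfectMatching Q' := by
          constructor
          · intro v
            show t (Q (t (t (Q (t v))))) = v
            rw [htt, hQ.1, htt]
          · intro v h
            rw [hQ'apply] at h
            have h2 : Q (t v) = t v := by
              have h3 := congrArg t h
              rw [htt] at h3
              exact h3
            exact hQ.2 (t v) h2
        have hQ'a : Q' a = c := by rw [hQ'apply, hta, ← hb, htb]
        have hQ'c : Q' c = a := by rw [hQ'apply, htc, hQb, hta]
        have hQ'b : Q' b = d := by rw [hQ'apply, htb, ← hd, htd]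
        have hQ'd : Q' d = b := by rw [hQ'apply, htd, hQd, htc]
        set s : Finset V := {a, b, c, d} with hsdef
        have houtside : ∀ v ∉ s, Q' v = Q v := by
          intro v hv
          simp only [hsdef, Finset.mem_insert, Finset.mem_singleton, not_or] at hv
          obtain ⟨hva, hvb, hvc, hvd⟩ := hv
          have htv : t v = v := Equiv.swap_apply_of_ne_of_ne hvb hvc
          have h1 : Q v ≠ b := fun h => hva (Q.injective (h.trans hb))
          have h2 : Q v ≠ c := fun h => hvd (Q.injective (h.trans hQd.symm))
          rw [hQ'apply, htv]
          exact Equiv.swap_apply_of_ne_of_ne h1 h2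
        have hbreak : ThreeBreak Q Q' := by
          refine ⟨s, ?_, ?_, houtside⟩
          · have h4 : s.card ≤ 4 := by
              refine le_trans (Finset.card_insert_le _ _) (Nat.succ_le_succ ?_)
              refine le_trans (Finset.card_insert_le _ _) (Nat.succ_le_succ ?_)
              refine le_trans (Finset.card_insert_le _ _) (Nat.succ_le_succ ?_)
              simp
            omega
          · intro v hv
            simp only [hsdef, Finset.mem_insert, Finset.mem_singleton] at hv ⊢
            rcases hv with rfl | rfl | rfl | rfl
            · right; left; exact hb.symm
            · left; exact hQb
            · right; right; right; exact hd.symm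
            · right; right; left; exact hQd
        have hsub : (Finset.univ.filter fun v => Q' v ≠ P v) ⊆
            (Finset.univ.filter fun v => Q v ≠ P v) := by
          intro v hv
          simp only [Finset.mem_filter, Finset.mem_univ, true_and] at hv ⊢
          by_cases hva : v = a
          · subst hva; exact (hv (hQ'a.trans hc)).elim
          · by_cases hvc : v = c
            · subst hvc; exact (hv (hQ'c.trans hPc.symm)).elim
            · by_cases hvb : v = b
              · subst hvb
                intro h
                have h2 : P b = P c := ((hQb.symm.trans h).symm.trans hPc.symm)
                exact hbc (P.injective h2)
              · by_cases hvd : v = d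
                · subst hvd
                  intro h
                  have h2 : P d = P a := (h.symm.trans hQd).trans hc
                  exact hda (P.injective h2)
                · rw [houtside v (by simp [hsdef, hva, hvb, hvc, hvd])] at hv
                  exact hv
        have hmema : a ∈ (Finset.univ.filter fun v => Q v ≠ P v) := by simp; exact ha
        have hnmema : a ∉ (Finset.univ.filter fun v => Q' v ≠ P v) := by
          simp only [Finset.mem_filter, Finset.mem_univ, true_and, not_not, ne_eq]
          rw [hQ'a, hc]
        have hlt : (Finset.univ.filter fun v => Q' v ≠ P v).card < n := by
          rw [← hn]
          exact Finset.card_lt_card ⟨hsub, fun hsub' => hnmema (hsub' hmema)⟩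
        obtain ⟨k, g, hg0, hgk, hgstep⟩ := ih _ hlt Q' hQ'pm rfl
        refine ⟨k + 1, fun i => Nat.casesOn i Q g, rfl, hgk, ?_⟩
        intro i hi
        cases i with
        | zero =>
          constructor
          · show IsPerfectMatching (g 0)
            rw [hg0]; exact hQ'pm
          · show ThreeBreak Q (g 0)
            rw [hg0]; exact hbreak
        | succ j => exact hgstep j (by omega)
  intro Q hQ
  exact main _ Q hQ rfl

end Aux

/-- The minimum number of 3-breaks needed to transform the red matching Q into
the black matching P is at least (n - c(P,Q))/2. -/
theorem threeBreak_distance_lower_bound {V : Type*} [Fintype V] [DecidableEq V]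
    (P Q : Equiv.Perm V) (hP : IsPerfectMatching P) (hQ : IsPerfectMatching Q) :
    Fintype.card V / 2 - bpCycles P Q ≤ 2 * sInf {k : ℕ | ThreeBreakChain P Q k} := by
  have hne : {k : ℕ | ThreeBreakChain P Q k}.Nonempty := exists_chain hP Q hQ
  have hmem : sInf {k : ℕ | ThreeBreakChain P Q k} ∈ {k : ℕ | ThreeBreakChain P Q k} :=
    Nat.sInf_mem hne
  set k := sInf {k : ℕ | ThreeBreakChain P Q k} with hk
  have hFr : Fr (P * Q) ≤ 4 * k := Fr_chain hP k Q hQ hmem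
  have hrn := Fr_rank_nullity (P * Q)
  have hker := ker_dim_le (P * Q)
  set N := Multiset.card (P * Q).cycleType + (Fintype.card V - (P * Q).support.card) with hN
  have hbp : bpCycles P Q = N / 2 := rfl
  omega
end
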